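/- Let x and y be elements of a commutative ring satisfying x·y = x + y. Then for all integers m ≥ 1 and k ≥ 1: x^m · y^k = Σ_{j=1}^m binom(m+k−j−1, k−1)·x^j + Σ_{j=1}^k binom(m+k−j−1, m−1)·y^j. -/

import Mathlib

open Finset

-- x * y^j = x + sum of y^i
private lemma xyj {R : Type*} [CommRing R] (x y : R) (h : x * y = x + y) :
    ∀ j, 1 ≤ j → x * y ^ j = x + ∑ i ∈ Icc 1 j, y ^ i := by
  intro j hj
  induction j with
  | zero => omega
  | succ n ih =>
    rcases Nat.lt_or_ge 1 (n + 1) with h1 | h1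
    · have hn : 1 ≤ n := by omega
      have e : x * y ^ (n + 1) = (x * y) * y ^ n := by ring
      rw [e, h, add_mul, ih hn, Finset.sum_Icc_succ_top (by omega : 1 ≤ n + 1)]
      ring
    · have : n = 0 := by omega
      subst this
      simp [h]

-- hockey stick, range form
private lemma hs_range (a n : ℕ) :
    ∑ j ∈ range n, Nat.choose (a + j) a = Nat.choose (a + n) (a + 1) := by
  induction n with
  | zero => simp
  | succ n ih =>
    rw [Finset.sum_range_succ, ih]
    have : a + (n + 1) = (a + n) + 1 := by omega
    rw [this, Nat.choose_succ_succ]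
    simp only [Nat.succ_eq_add_one]
    omega

-- hockey stick, Icc form with shifted decreasing index
private lemma hs2 (a i k : ℕ) (hi : 1 ≤ i) (hik : i ≤ k) :
    ∑ j ∈ Icc i k, Nat.choose (a + k - j) a = Nat.choose (a + k - i + 1) (a + 1) := by
  rw [← Finset.Ico_add_one_right_eq_Icc, Finset.sum_Ico_eq_sum_range]
  have e1 : k + 1 - i = k - i + 1 := by omega
  rw [e1]
  have e2 : ∀ t ∈ range (k - i + 1), Nat.choose (a + k - (i + t)) a
      = Nat.choose (a + (k - i + 1 - 1 - t)) a := by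
    intro t ht
    simp only [mem_range] at ht
    congr 1
    omega
  rw [Finset.sum_congr rfl e2, Finset.sum_range_reflect (fun s => Nat.choose (a + s) a)]
  rw [hs_range]
  congr 1
  omega

private lemma swap_sum {R : Type*} [AddCommMonoid R] (k : ℕ) (F : ℕ → ℕ → R) :
    ∑ j ∈ Icc 1 k, ∑ i ∈ Icc 1 j, F i j = ∑ i ∈ Icc 1 k, ∑ j ∈ Icc i k, F i j := by
  have h1 : ∀ j ∈ Icc 1 k, ∑ i ∈ Icc 1 j, F i j
      = ∑ i ∈ Icc 1 k, if i ≤ j then F i j else 0 := by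
    intro j hj
    simp only [mem_Icc] at hj
    rw [← Finset.sum_filter]
    congr 1
    ext a; simp only [mem_filter, mem_Icc]; omega
  have h2 : ∀ i ∈ Icc 1 k, ∑ j ∈ Icc i k, F i j
      = ∑ j ∈ Icc 1 k, if i ≤ j then F i j else 0 := by
    intro i hi
    simp only [mem_Icc] at hi
    rw [← Finset.sum_filter]
    congr 1
    ext a; simp only [mem_filter, mem_Icc]; omega
  rw [Finset.sum_congr rfl h1, Finset.sum_congr rfl h2, Finset.sum_comm]

theorem xm_yk_identity {R : Type*} [CommRing R] (x y : R) (h : x * y = x + y)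
    (m k : ℕ) (hm : 1 ≤ m) (hk : 1 ≤ k) :
    x ^ m * y ^ k =
      (∑ j ∈ Finset.Icc 1 m, (Nat.choose (m + k - j - 1) (k - 1) : R) * x ^ j) +
      ∑ j ∈ Finset.Icc 1 k, (Nat.choose (m + k - j - 1) (m - 1) : R) * y ^ j := by
  induction m, hm using Nat.le_induction with
  | base =>
    rw [pow_one, xyj x y h k hk]
    congr 1
    · rw [Finset.Icc_self, Finset.sum_singleton, pow_one,
        show 1 + k - 1 - 1 = k - 1 by omega, Nat.choose_self]
      simp
    · apply Finset.sum_congr rfl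
      intro j hj
      simp only [mem_Icc] at hj
      rw [show (1:ℕ) - 1 = 0 by rfl, Nat.choose_zero_right]
      simp
  | succ m hm ih =>
    have key : ∀ j ∈ Icc 1 k,
        x * (((m + k - j - 1).choose (m - 1) : R) * y ^ j)
        = ((m + k - j - 1).choose (m - 1) : R) * x
          + ∑ i ∈ Icc 1 j, ((m + k - j - 1).choose (m - 1) : R) * y ^ i := by
      intro j hj
      simp only [mem_Icc] at hj
      rw [mul_left_comm, xyj x y h j hj.1, mul_add, Finset.mul_sum]
    have e : x ^ (m + 1) * y ^ k = x * (x ^ m * y ^ k) := by ring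
    rw [e, ih, mul_add, Finset.mul_sum, Finset.mul_sum,
      Finset.sum_congr rfl key, Finset.sum_add_distrib, ← Finset.sum_mul,
      swap_sum]
    have hx1 : (∑ j ∈ Icc 1 k, (((m + k - j - 1).choose (m - 1) : ℕ) : R))
        = (((m + k - 1).choose m : ℕ) : R) := by
      rw [← Nat.cast_sum]
      congr 1
      calc ∑ j ∈ Icc 1 k, (m + k - j - 1).choose (m - 1)
          = ∑ j ∈ Icc 1 k, ((m - 1) + k - j).choose (m - 1) := by
            apply Finset.sum_congr rfl; intro j hj; simp only [mem_Icc] at hj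
            congr 1; omega
        _ = ((m - 1) + k - 1 + 1).choose ((m - 1) + 1) := hs2 (m - 1) 1 k le_rfl hk
        _ = (m + k - 1).choose m := by congr 1 <;> omega
    have hyi : ∀ i ∈ Icc 1 k,
        (∑ j ∈ Icc i k, (((m + k - j - 1).choose (m - 1) : ℕ) : R) * y ^ i)
        = (((m + k - i).choose m : ℕ) : R) * y ^ i := by
      intro i hi
      simp only [mem_Icc] at hi
      rw [← Finset.sum_mul, ← Nat.cast_sum]
      congr 2
      calc ∑ j ∈ Icc i k, (m + k - j - 1).choose (m - 1)
          = ∑ j ∈ Icc i k, ((m - 1) + k - j).choose (m - 1) := by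
            apply Finset.sum_congr rfl; intro j hj; simp only [mem_Icc] at hj
            congr 1; omega
        _ = ((m - 1) + k - i + 1).choose ((m - 1) + 1) := hs2 (m - 1) i k hi.1 hi.2
        _ = (m + k - i).choose m := by congr 1 <;> omega
    rw [hx1, Finset.sum_congr rfl hyi]
    -- now handle RHS
    have hrx : ∑ j ∈ Icc 1 (m + 1), ((Nat.choose (m + 1 + k - j - 1) (k - 1) : ℕ) : R) * x ^ j
        = (((m + k - 1).choose m : ℕ) : R) * x
          + ∑ j ∈ Icc 1 m, x * ((((m + k - j - 1).choose (k - 1) : ℕ) : R) * x ^ j) := by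
      rw [← Finset.Ico_add_one_right_eq_Icc, Finset.sum_eq_sum_Ico_succ_bot (by omega)]
      congr 1
      · rw [pow_one, show m + 1 + k - 1 - 1 = m + k - 1 by omega,
          ← Nat.choose_symm (show m ≤ m + k - 1 by omega),
          show m + k - 1 - m = k - 1 by omega]
      · rw [show (Icc 1 m : Finset ℕ) = Ico 1 (m + 1) by rw [Finset.Ico_add_one_right_eq_Icc],
          Finset.sum_Ico_eq_sum_range, Finset.sum_Ico_eq_sum_range]
        apply Finset.sum_congr (by congr 1 <;> omega)
        intro t ht
        simp only [mem_range] at ht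
        rw [show m + 1 + k - (2 + t) - 1 = m + k - (1 + t) - 1 by omega]
        ring
    have hry : ∑ j ∈ Icc 1 k, ((Nat.choose (m + 1 + k - j - 1) (m + 1 - 1) : ℕ) : R) * y ^ j
        = ∑ j ∈ Icc 1 k, (((m + k - j).choose m : ℕ) : R) * y ^ j := by
      apply Finset.sum_congr rfl
      intro j hj
      simp only [mem_Icc] at hj
      rw [show m + 1 + k - j - 1 = m + k - j by omega, Nat.add_sub_cancel]
    rw [hrx, hry]
    ring
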